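/- Let ε > 0, ξ ≠ 0, μ ∈ [0,1] with μ ≠ 1, and suppose 2ε|ξ| < 1. Then the cubic polynomial P(Δt) = -ξ⁴(μ-1)²Δt³ + 2ξ²(2ε²ξ²μ + 1 - μ)Δt² + (4ε²ξ² - 1)Δt in Δt has roots 0 and T_± = [2ε²ξ²μ - μ + 1 ± 2εξ√(ε²ξ²μ² - μ + 1)] / ((μ-1)²ξ²), and both T_+ and T_- are positive real numbers (the discriminant ε²ξ²μ² - μ + 1 being positive). -/

import Mathlib

/-- Roots of the cubic stability polynomial (8.8): under `2ε|ξ| < 1` the discriminant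
`ε²ξ²μ² - μ + 1` is positive, `0`, `T₊` and `T₋` are roots, and `T₊, T₋ > 0`. -/
theorem stmt_5 (ε ξ μ : ℝ) (hε : 0 < ε) (hξ : ξ ≠ 0)
    (hμ : μ ∈ Set.Icc (0 : ℝ) 1) (hμ1 : μ ≠ 1)
    (hcfl : 2 * ε * |ξ| < 1) :
    0 < ε ^ 2 * ξ ^ 2 * μ ^ 2 - μ + 1 ∧
    (let P : ℝ → ℝ := fun t =>
        -ξ ^ 4 * (μ - 1) ^ 2 * t ^ 3 + 2 * ξ ^ 2 * (2 * ε ^ 2 * ξ ^ 2 * μ + 1 - μ) * t ^ 2 +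
          (4 * ε ^ 2 * ξ ^ 2 - 1) * t
     let Tp : ℝ := (2 * ε ^ 2 * ξ ^ 2 * μ - μ + 1 +
        2 * ε * ξ * Real.sqrt (ε ^ 2 * ξ ^ 2 * μ ^ 2 - μ + 1)) / ((μ - 1) ^ 2 * ξ ^ 2)
     let Tm : ℝ := (2 * ε ^ 2 * ξ ^ 2 * μ - μ + 1 -
        2 * ε * ξ * Real.sqrt (ε ^ 2 * ξ ^ 2 * μ ^ 2 - μ + 1)) / ((μ - 1) ^ 2 * ξ ^ 2)
     P 0 = 0 ∧ P Tp = 0 ∧ P Tm = 0 ∧ 0 < Tp ∧ 0 < Tm) := by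
  obtain ⟨hμ0, hμle⟩ := hμ
  have hξ2 : 0 < ξ ^ 2 := by positivity
  have habs : 0 < |ξ| := abs_pos.mpr hξ
  have hμlt : μ < 1 := lt_of_le_of_ne hμle hμ1
  have haξ : (ε * |ξ|) ^ 2 = ε ^ 2 * ξ ^ 2 := by rw [mul_pow, sq_abs]
  have ha1 : 4 * (ε ^ 2 * ξ ^ 2) < 1 := by
    nlinarith [mul_pos hε habs]
  have hD : 0 < ε ^ 2 * ξ ^ 2 * μ ^ 2 - μ + 1 := by
    have h1 : 0 ≤ ε ^ 2 * ξ ^ 2 * μ ^ 2 := by positivity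
    linarith
  refine ⟨hD, ?_⟩
  set s := Real.sqrt (ε ^ 2 * ξ ^ 2 * μ ^ 2 - μ + 1) with hs
  have hs2 : s ^ 2 = ε ^ 2 * ξ ^ 2 * μ ^ 2 - μ + 1 := Real.sq_sqrt hD.le
  have hspos : 0 < s := Real.sqrt_pos.mpr hD
  have hdenpos : 0 < (μ - 1) ^ 2 * ξ ^ 2 := by
    have hne : μ - 1 ≠ 0 := sub_ne_zero.mpr hμ1
    positivity
  have hden : (μ - 1) ^ 2 * ξ ^ 2 ≠ 0 := hdenpos.ne'
  -- generic root lemma for the quadratic factor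
  have key : ∀ x : ℝ,
      (-ξ ^ 4 * (μ - 1) ^ 2 * x ^ 2 +
        2 * ξ ^ 2 * (2 * ε ^ 2 * ξ ^ 2 * μ + 1 - μ) * x * ((μ - 1) ^ 2 * ξ ^ 2) +
        (4 * ε ^ 2 * ξ ^ 2 - 1) * ((μ - 1) ^ 2 * ξ ^ 2) ^ 2 = 0) →
      -ξ ^ 4 * (μ - 1) ^ 2 * (x / ((μ - 1) ^ 2 * ξ ^ 2)) ^ 3 +
        2 * ξ ^ 2 * (2 * ε ^ 2 * ξ ^ 2 * μ + 1 - μ) * (x / ((μ - 1) ^ 2 * ξ ^ 2)) ^ 2 +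
        (4 * ε ^ 2 * ξ ^ 2 - 1) * (x / ((μ - 1) ^ 2 * ξ ^ 2)) = 0 := by
    intro x hx
    have hA3 : ((μ - 1) ^ 2 * ξ ^ 2) ^ 3 ≠ 0 := pow_ne_zero _ hden
    have h2 : (-ξ ^ 4 * (μ - 1) ^ 2 * (x / ((μ - 1) ^ 2 * ξ ^ 2)) ^ 3 +
        2 * ξ ^ 2 * (2 * ε ^ 2 * ξ ^ 2 * μ + 1 - μ) * (x / ((μ - 1) ^ 2 * ξ ^ 2)) ^ 2 +
        (4 * ε ^ 2 * ξ ^ 2 - 1) * (x / ((μ - 1) ^ 2 * ξ ^ 2))) * ((μ - 1) ^ 2 * ξ ^ 2) ^ 3 =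
        x * (-ξ ^ 4 * (μ - 1) ^ 2 * x ^ 2 +
          2 * ξ ^ 2 * (2 * ε ^ 2 * ξ ^ 2 * μ + 1 - μ) * x * ((μ - 1) ^ 2 * ξ ^ 2) +
          (4 * ε ^ 2 * ξ ^ 2 - 1) * ((μ - 1) ^ 2 * ξ ^ 2) ^ 2) := by
      field_simp
    have h3 := h2.trans (by rw [hx, mul_zero])
    exact (mul_eq_zero.mp h3).resolve_right hA3
  have hQp : -ξ ^ 4 * (μ - 1) ^ 2 * (2 * ε ^ 2 * ξ ^ 2 * μ - μ + 1 + 2 * ε * ξ * s) ^ 2 +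
      2 * ξ ^ 2 * (2 * ε ^ 2 * ξ ^ 2 * μ + 1 - μ) * (2 * ε ^ 2 * ξ ^ 2 * μ - μ + 1 + 2 * ε * ξ * s) *
        ((μ - 1) ^ 2 * ξ ^ 2) +
      (4 * ε ^ 2 * ξ ^ 2 - 1) * ((μ - 1) ^ 2 * ξ ^ 2) ^ 2 = 0 := by
    linear_combination (-4 * ε ^ 2 * ξ ^ 6 * (μ - 1) ^ 2) * hs2
  have hQm : -ξ ^ 4 * (μ - 1) ^ 2 * (2 * ε ^ 2 * ξ ^ 2 * μ - μ + 1 - 2 * ε * ξ * s) ^ 2 +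
      2 * ξ ^ 2 * (2 * ε ^ 2 * ξ ^ 2 * μ + 1 - μ) * (2 * ε ^ 2 * ξ ^ 2 * μ - μ + 1 - 2 * ε * ξ * s) *
        ((μ - 1) ^ 2 * ξ ^ 2) +
      (4 * ε ^ 2 * ξ ^ 2 - 1) * ((μ - 1) ^ 2 * ξ ^ 2) ^ 2 = 0 := by
    linear_combination (-4 * ε ^ 2 * ξ ^ 6 * (μ - 1) ^ 2) * hs2
  -- positivity of numerators
  have hkey : 2 * ε * |ξ| * s < 2 * ε ^ 2 * ξ ^ 2 * μ - μ + 1 := by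
    have hB : 0 < 2 * ε ^ 2 * ξ ^ 2 * μ - μ + 1 := by nlinarith
    have ht2 : (2 * ε * |ξ| * s) ^ 2 =
        4 * (ε ^ 2 * ξ ^ 2) * (ε ^ 2 * ξ ^ 2 * μ ^ 2 - μ + 1) := by
      rw [mul_pow, mul_pow, mul_pow, sq_abs, hs2]; ring
    have hdiff : (2 * ε ^ 2 * ξ ^ 2 * μ - μ + 1) ^ 2 - (2 * ε * |ξ| * s) ^ 2 =
        (1 - μ) ^ 2 * (1 - 4 * (ε ^ 2 * ξ ^ 2)) := by rw [ht2]; ring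
    have hpos : 0 < (1 - μ) ^ 2 * (1 - 4 * (ε ^ 2 * ξ ^ 2)) := by
      have hne : 1 - μ ≠ 0 := by intro h; exact hμ1 (by linarith)
      have h1 : 0 < (1 - μ) ^ 2 := by positivity
      have h2 : 0 < 1 - 4 * (ε ^ 2 * ξ ^ 2) := by linarith
      exact mul_pos h1 h2
    have hlt2 : (2 * ε * |ξ| * s) ^ 2 < (2 * ε ^ 2 * ξ ^ 2 * μ - μ + 1) ^ 2 := by linarith
    exact lt_of_pow_lt_pow_left₀ 2 hB.le hlt2
  have hbound : |2 * ε * ξ * s| < 2 * ε ^ 2 * ξ ^ 2 * μ - μ + 1 := by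
    have heq : |2 * ε * ξ * s| = 2 * ε * |ξ| * s := by
      rw [abs_mul, abs_mul, abs_mul, abs_of_pos hspos, abs_of_pos hε]
      norm_num
    rw [heq]; exact hkey
  obtain ⟨hb1, hb2⟩ := abs_lt.mp hbound
  exact ⟨by ring, key _ hQp, key _ hQm,
    div_pos (by linarith) hdenpos, div_pos (by linarith) hdenpos⟩
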